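/- Let η be a substitution and u ∈ A^ℤ a two-sided periodic point of η with growing seed s = u_{-1}|u_0. Then for every n ∈ ℤ, the letter u_n equals A_{η,s}(rep_u(n)), the state reached by the automaton A_{η,s} after reading the representation of n. In other words, the two-sided periodic point u is automatic with respect to the Dumont–Thomas complement numeration system rep_u. -/

import Mathlib

open Filter List

variable {A : Type*}

/-- A substitution applied to a word: concatenation of the images of its letters. -/
def substW (η : A → List A) (w : List A) : List A := (w.map η).flatten

/-- The `k`-th iterate of a substitution applied to a word. -/
def iterW (η : A → List A) (k : ℕ) (w : List A) : List A := (substW η)^[k] w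

/-- `η` is a substitution: nonempty images and at least one growing letter. -/
def IsSubstitution (η : A → List A) : Prop :=
  (∀ c, η c ≠ []) ∧ ∃ a, Tendsto (fun k => (iterW η k [a]).length) atTop atTop

/-- `(m i, a i)` for `i = 0, …, len-1` is an `x`-admissible sequence:
`m (i) ++ [a i]` is a prefix of `η (a (i+1))` and `m (len-1) ++ [a (len-1)]`
is a prefix of `η x`. -/
def AdmSeq (η : A → List A) (len : ℕ) (m : ℕ → List A) (a : ℕ → A) (x : A) : Prop :=
  (∀ i, i + 1 < len → (m i ++ [a i]) <+: η (a (i + 1))) ∧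
  (1 ≤ len → (m (len - 1) ++ [a (len - 1)]) <+: η x)

/-- `Σ_{j<k} |η^j(m_j)|`. -/
def sumLen (η : A → List A) (k : ℕ) (m : ℕ → List A) : ℕ :=
  ∑ j ∈ Finset.range k, (iterW η j (m j)).length

/-- `η^{k-1}(m_{k-1}) η^{k-2}(m_{k-2}) ⋯ η^0(m_0)`. -/
def concatDT (η : A → List A) (k : ℕ) (m : ℕ → List A) : List A :=
  ((List.range k).reverse.map (fun j => iterW η j (m j))).flatten

/-- The digit word `|m_{k-1}| ⊙ |m_{k-2}| ⊙ ⋯ ⊙ |m_0|`. -/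
def dtDigits (k : ℕ) (m : ℕ → List A) : List ℕ :=
  (List.range k).reverse.map (fun j => (m j).length)

/-- Partial run of the automaton `A_{η,x}`: from state `x`, the digit `d`
moves to the `d`-th letter of `η x` when `d < |η x|`. -/
def run (η : A → List A) : List ℕ → A → Option A
  | [], x => some x
  | d :: w, x => if h : d < (η x).length then run η w ((η x)[d]) else none

/-- `u` restricted to nonnegative positions is a periodic point of `η` of period `p`:
every `η^p`-image of a prefix of `u` is again a prefix of `u`. -/
def RightPer (η : A → List A) (p : ℕ) (u : ℤ → A) : Prop :=
  ∀ n : ℕ, ∀ j : ℕ, j < (iterW η p (List.ofFn (fun i : Fin (n+1) => u i))).length →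
    (iterW η p (List.ofFn (fun i : Fin (n+1) => u i)))[j]? = some (u j)

/-- `u` restricted to negative positions is a periodic point of `η` of period `p`:
every `η^p`-image of a suffix `u_{-(n+1)} ⋯ u_{-1}` of the left part is again a
suffix of the left part of `u`. -/
def LeftPer (η : A → List A) (p : ℕ) (u : ℤ → A) : Prop :=
  ∀ n : ℕ, ∀ j : ℕ,
    j < (iterW η p (List.ofFn (fun i : Fin (n+1) => u ((i : ℤ) - (n+1))))).length →
    (iterW η p (List.ofFn (fun i : Fin (n+1) => u ((i : ℤ) - (n+1)))))[j]? =
      some (u ((j : ℤ) -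
        (iterW η p (List.ofFn (fun i : Fin (n+1) => u ((i : ℤ) - (n+1))))).length))

/-- `u : ℤ → A` is a two-sided periodic point of `η` of period `p ≥ 1` with
growing seed `u₋₁ | u₀`. -/
def TwoSidedPerPoint (η : A → List A) (p : ℕ) (u : ℤ → A) : Prop :=
  1 ≤ p ∧ RightPer η p u ∧ LeftPer η p u ∧
  Tendsto (fun k => (iterW η k [u 0]).length) atTop atTop ∧
  Tendsto (fun k => (iterW η k [u (-1)]).length) atTop atTop

/-- The Dumont–Thomas decomposition data of a positive integer `n` with respect to
the letter `x` (Theorem of Dumont–Thomas for the right-infinite part):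
`p ∣ k`, `p ≤ k`, the sequence is `x`-admissible, `m_{k-1} ⋯ m_{k-p} ≠ ε` and
`Σ_{j<k} |η^j(m_j)| = n`. -/
def PosSpec (η : A → List A) (p : ℕ) (x : A) (n : ℤ) (k : ℕ) (m : ℕ → List A)
    (a : ℕ → A) : Prop :=
  p ∣ k ∧ p ≤ k ∧ AdmSeq η k m a x ∧ (∃ i, i < p ∧ m (k - 1 - i) ≠ []) ∧
  (sumLen η k m : ℤ) = n

/-- The Dumont–Thomas decomposition data of an integer `n ≤ -2` with respect to
the letter `b` (Theorem of Dumont–Thomas for the left-infinite part). -/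
def NegSpec (η : A → List A) (p : ℕ) (b : A) (n : ℤ) (k : ℕ) (m : ℕ → List A)
    (a : ℕ → A) : Prop :=
  p ∣ k ∧ p ≤ k ∧ AdmSeq η k m a b ∧
  ((List.range p).map (fun i => iterW η (p - 1 - i) (m (k - 1 - i)))).flatten
      ++ [a (k - p)] ≠ iterW η p [b] ∧
  (sumLen η k m : ℤ) = n + (iterW η k [b]).length

/-- `w` is the Dumont–Thomas complement representation `rep_u(n)` of `n ∈ ℤ`. -/
def RepSpec (η : A → List A) (p : ℕ) (u : ℤ → A) (n : ℤ) (w : List ℕ) : Prop :=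
  (n = 0 ∧ w = [0]) ∨ (n = -1 ∧ w = [1]) ∨
  (1 ≤ n ∧ ∃ k m a, PosSpec η p (u 0) n k m a ∧ w = 0 :: dtDigits k m) ∨
  (n ≤ -2 ∧ ∃ k m a, NegSpec η p (u (-1)) n k m a ∧ w = 1 :: dtDigits k m)

/-- Run of the automaton `A_{η,s}` with initial state `start`: the first digit
`0` (resp. `1`) moves to `u 0` (resp. `u (-1)`). -/
def runSeed (η : A → List A) (u : ℤ → A) : List ℕ → Option A
  | [] => none
  | d :: w => if d = 0 then run η w (u 0) else if d = 1 then run η w (u (-1)) else none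

/-- `|η^{k-p-1}(m_{k-1}) ⋯ η^0(m_p)|`, the `u`-quotient of a positive integer. -/
def uQuotPos (η : A → List A) (p k : ℕ) (m : ℕ → List A) : ℤ :=
  ∑ j ∈ Finset.range (k - p), ((iterW η j (m (j + p))).length : ℤ)

/-- `w = tail_{η,p,x}(n)`: the digit word of the unique `x`-admissible sequence of
length `p` whose length-sum is `n`. -/
def TailSpec (η : A → List A) (p : ℕ) (x : A) (n : ℕ) (w : List ℕ) : Prop :=
  ∃ m a, AdmSeq η p m a x ∧ sumLen η p m = n ∧ w = dtDigits p m

/-- Radix order: shorter words first, ties broken lexicographically. -/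
def radLt (v w : List ℕ) : Prop :=
  v.length < w.length ∨ (v.length = w.length ∧ List.Lex (· < ·) v w)

/-- Reversed-radix order: longer words first, ties broken lexicographically. -/
def revLt (v w : List ℕ) : Prop :=
  w.length < v.length ∨ (v.length = w.length ∧ List.Lex (· < ·) v w)

/-- The total order `≺` on `{0,1}D*`. -/
def precLt (v w : List ℕ) : Prop :=
  (v.head? = some 1 ∧ w.head? = some 0) ∨
  (v.head? = some 0 ∧ w.head? = some 0 ∧ radLt v w) ∨
  (v.head? = some 1 ∧ w.head? = some 1 ∧ revLt v w)

/-- The base-2 value `Σ_{i<k} w_i 2^i` of the word `w = w_{k-1} ⋯ w_0`. -/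
def natVal2 (w : List ℕ) : ℕ := w.foldl (fun acc d => 2 * acc + d) 0

/-- The two's complement value `Σ_{i<k} w_i 2^i − w_{k-1} 2^k`. -/
def val2c (w : List ℕ) : ℤ := (natVal2 w : ℤ) - (w.headI : ℤ) * 2 ^ w.length

/-- Fibonacci numbers with `F 0 = 1`, `F 1 = 2`. -/
def fib2 : ℕ → ℕ
  | 0 => 1
  | 1 => 2
  | n + 2 => fib2 (n + 1) + fib2 n

/-- The Fibonacci complement value `Σ_{i<k} w_i F_i − w_{k-1} F_k`
of the word `w = w_{k-1} ⋯ w_0`. -/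
def valFc (w : List ℕ) : ℤ :=
  (∑ i ∈ Finset.range w.length, (w.reverse.getD i 0 : ℤ) * fib2 i) -
    (w.headI : ℤ) * fib2 w.length

section Aux

variable (η : A → List A)

lemma substW_append (v w : List A) : substW η (v ++ w) = substW η v ++ substW η w := by
  simp [substW]

lemma iterW_zero (w : List A) : iterW η 0 w = w := rfl

lemma iterW_succ' (k : ℕ) (w : List A) : iterW η (k + 1) w = iterW η k (substW η w) := by
  simp [iterW, Function.iterate_succ_apply]

lemma iterW_add (j k : ℕ) (w : List A) : iterW η (j + k) w = iterW η j (iterW η k w) := by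
  simp [iterW, Function.iterate_add_apply]

lemma substW_singleton (x : A) : substW η [x] = η x := by simp [substW]

lemma iterW_append (k : ℕ) (v w : List A) :
    iterW η k (v ++ w) = iterW η k v ++ iterW η k w := by
  induction k generalizing v w with
  | zero => rfl
  | succ k ih => rw [iterW_succ', substW_append, ih, iterW_succ', iterW_succ']

lemma iterW_prefix (k : ℕ) {v w : List A} (h : v <+: w) : iterW η k v <+: iterW η k w := by
  obtain ⟨t, rfl⟩ := h
  exact ⟨iterW η k t, (iterW_append η k v t).symm⟩

lemma substW_ne_nil (hne : ∀ c, η c ≠ []) {w : List A} (hw : w ≠ []) :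
    substW η w ≠ [] := by
  cases w with
  | nil => simp at hw
  | cons c t =>
    simp only [substW, List.map_cons, List.flatten_cons]
    intro h
    exact hne c (List.append_eq_nil_iff.mp h).1

lemma iterW_ne_nil (hne : ∀ c, η c ≠ []) (k : ℕ) {w : List A} (hw : w ≠ []) :
    iterW η k w ≠ [] := by
  induction k generalizing w with
  | zero => exact hw
  | succ k ih => rw [iterW_succ']; exact ih (substW_ne_nil η hne hw)

lemma dtDigits_succ (k : ℕ) (m : ℕ → List A) :
    dtDigits (k + 1) m = (m k).length :: dtDigits k m := by
  simp [dtDigits, List.range_succ]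

lemma concatDT_succ (k : ℕ) (m : ℕ → List A) :
    concatDT η (k + 1) m = iterW η k (m k) ++ concatDT η k m := by
  simp [concatDT, List.range_succ]

lemma concatDT_length (k : ℕ) (m : ℕ → List A) :
    (concatDT η k m).length = sumLen η k m := by
  induction k with
  | zero => rfl
  | succ k ih =>
    rw [concatDT_succ, sumLen, Finset.sum_range_succ, List.length_append, ih, sumLen]
    omega

lemma getElem_of_concat_prefix {l : List A} {b : A} {w : List A} (h : (l ++ [b]) <+: w) :
    ∃ hl : l.length < w.length, w[l.length] = b := by
  obtain ⟨t, rfl⟩ := h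
  have hl : l.length < ((l ++ [b]) ++ t).length := by simp
  refine ⟨hl, ?_⟩
  rw [List.getElem_append_left (by simp)]
  simp

lemma adm_step {k : ℕ} {m : ℕ → List A} {a : ℕ → A} {x : A}
    (h : AdmSeq η (k + 2) m a x) : AdmSeq η (k + 1) m a (a (k + 1)) := by
  refine ⟨fun i hi => h.1 i (by omega), fun _ => ?_⟩
  simpa using h.1 k (by omega)

lemma run_adm (m : ℕ → List A) (a : ℕ → A) :
    ∀ (k : ℕ) (x : A), AdmSeq η (k + 1) m a x →
      run η (dtDigits (k + 1) m) x = some (a 0) := by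
  intro k
  induction k with
  | zero =>
    intro x h
    obtain ⟨hl, hg⟩ := getElem_of_concat_prefix (h.2 (by norm_num))
    rw [dtDigits_succ]
    simp only [run, hl, dif_pos]
    rw [hg]
    rfl
  | succ k ih =>
    intro x h
    have hp : m (k + 1) ++ [a (k + 1)] <+: η x := by simpa using h.2 (by norm_num)
    obtain ⟨hl, hg⟩ := getElem_of_concat_prefix hp
    rw [dtDigits_succ]
    simp only [run, hl, dif_pos]
    rw [hg]
    exact ih (a (k + 1)) (adm_step η h)

lemma concat_prefix (m : ℕ → List A) (a : ℕ → A) :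
    ∀ (k : ℕ) (x : A), AdmSeq η (k + 1) m a x →
      (concatDT η (k + 1) m ++ [a 0]) <+: iterW η (k + 1) [x] := by
  intro k
  induction k with
  | zero =>
    intro x h
    have hp := h.2 (by norm_num)
    have hc : concatDT η 1 m = m 0 := by
      simp [concatDT, iterW, List.range_succ, List.range_zero]
    have hi : iterW η 1 [x] = η x := by
      rw [iterW_succ', substW_singleton]; rfl
    rw [hc, hi]
    simpa using hp
  | succ k ih =>
    intro x h
    have hp : m (k + 1) ++ [a (k + 1)] <+: η x := by simpa using h.2 (by norm_num)
    have h1 := ih (a (k + 1)) (adm_step η h)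
    have h2 : iterW η (k + 1) (m (k + 1) ++ [a (k + 1)]) <+: iterW η (k + 2) [x] := by
      have := iterW_prefix η (k + 1) hp
      rwa [show iterW η (k + 2) [x] = iterW η (k + 1) (η x) from by
        rw [show k + 2 = (k + 1) + 1 from rfl, iterW_succ', substW_singleton]]
    rw [concatDT_succ, List.append_assoc]
    refine List.IsPrefix.trans ?_ h2
    rw [iterW_append]
    obtain ⟨s, hs⟩ := h1
    refine ⟨s, ?_⟩
    simp only [List.append_assoc] at hs ⊢
    rw [hs]

lemma getElem?_of_concat_prefix {l : List A} {b : A} {w : List A} (h : (l ++ [b]) <+: w) :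
    w[l.length]? = some b := by
  obtain ⟨t, rfl⟩ := h
  rw [List.getElem?_append_left (by simp)]
  rw [List.getElem?_append_right (by simp)]
  simp

lemma right_iter (p : ℕ) (u : ℤ → A) (hne : ∀ c, η c ≠ []) (hr : RightPer η p u) :
    ∀ (t : ℕ) (j : ℕ), j < (iterW η (p * t) [u 0]).length →
      (iterW η (p * t) [u 0])[j]? = some (u j) := by
  intro t
  induction t with
  | zero =>
    intro j hj
    simp only [Nat.mul_zero, iterW_zero, List.length_singleton] at hj ⊢
    have : j = 0 := by omega
    subst this
    simp
  | succ t ih =>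
    set v := iterW η (p * t) [u 0] with hv
    have hvne : v ≠ [] := iterW_ne_nil η hne _ (by simp)
    have hL : 1 ≤ v.length := List.length_pos_iff.mpr hvne
    have hvofn : List.ofFn (fun i : Fin (v.length - 1 + 1) => u i) = v := by
      apply List.ext_getElem (by simp; omega)
      intro i h1 h2
      rw [List.getElem_ofFn]
      have hval : v[i]'h2 = u i := by
        have h3 := ih i h2
        rw [List.getElem?_eq_getElem h2] at h3
        exact Option.some_inj.mp h3
      rw [hval]
    intro j hj
    have hiter : iterW η (p * (t + 1)) [u 0] = iterW η p v := by
      rw [hv, ← iterW_add]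
      ring_nf
    rw [hiter] at hj ⊢
    have := hr (v.length - 1) j (by rwa [hvofn])
    rwa [hvofn] at this

lemma left_iter (p : ℕ) (u : ℤ → A) (hne : ∀ c, η c ≠ []) (hl : LeftPer η p u) :
    ∀ (t : ℕ) (j : ℕ), j < (iterW η (p * t) [u (-1)]).length →
      (iterW η (p * t) [u (-1)])[j]? =
        some (u ((j : ℤ) - (iterW η (p * t) [u (-1)]).length)) := by
  intro t
  induction t with
  | zero =>
    intro j hj
    simp only [Nat.mul_zero, iterW_zero, List.length_singleton] at hj ⊢
    have : j = 0 := by omega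
    subst this
    simp
  | succ t ih =>
    set v := iterW η (p * t) [u (-1)] with hv
    have hvne : v ≠ [] := iterW_ne_nil η hne _ (by simp)
    have hL : 1 ≤ v.length := List.length_pos_iff.mpr hvne
    have hcast : ((v.length - 1 : ℕ) : ℤ) + 1 = (v.length : ℤ) := by
      omega
    have hvofn : List.ofFn (fun i : Fin (v.length - 1 + 1) =>
        u ((i : ℤ) - ((v.length - 1 : ℕ) + 1))) = v := by
      apply List.ext_getElem (by simp; omega)
      intro i h1 h2
      rw [List.getElem_ofFn]
      have hval : v[i]'h2 = u ((i : ℤ) - v.length) := by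
        have h3 := ih i h2
        rw [List.getElem?_eq_getElem h2] at h3
        exact Option.some_inj.mp h3
      rw [hval]
      simp only [Fin.val_mk]
      congr 1
      omega
    intro j hj
    have hiter : iterW η (p * (t + 1)) [u (-1)] = iterW η p v := by
      rw [hv, ← iterW_add]
      ring_nf
    rw [hiter] at hj ⊢
    have := hl (v.length - 1) j (by rwa [hvofn])
    rw [hvofn] at this
    exact this

end Aux

/-- Theorem: periodic points are automatic. For a two-sided
periodic point `u` of `η` with growing seed `s = u₋₁|u₀`, one has
`u_n = A_{η,s}(rep_u(n))` for every `n ∈ ℤ`. -/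
theorem periodic_point_automatic [Finite A] (η : A → List A)
    (hη : IsSubstitution η) (p : ℕ) (u : ℤ → A)
    (hu : TwoSidedPerPoint η p u) :
    ∀ (n : ℤ) (w : List ℕ), RepSpec η p u n w → runSeed η u w = some (u n) := by
  obtain ⟨hne, -⟩ := hη
  obtain ⟨hp, hright, hleft, -, -⟩ := hu
  intro n w hrep
  rcases hrep with ⟨hn, hw⟩ | ⟨hn, hw⟩ | ⟨hn, k, m, a, hpos, hw⟩ | ⟨hn, k, m, a, hneg, hw⟩
  · subst hn hw; simp [runSeed, run]
  · subst hn hw; simp [runSeed, run]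
  · obtain ⟨⟨t, ht⟩, hpk, hadm, -, hsum⟩ := hpos
    subst hw
    have hk1 : 1 ≤ k := le_trans hp hpk
    obtain ⟨k', rfl⟩ : ∃ k', k = k' + 1 := ⟨k - 1, by omega⟩
    have hrun := run_adm η m a k' (u 0) hadm
    have hpre := concat_prefix η m a k' (u 0) hadm
    have hlen : (concatDT η (k' + 1) m).length = sumLen η (k' + 1) m :=
      concatDT_length η _ m
    have hget : (iterW η (k' + 1) [u 0])[sumLen η (k' + 1) m]? = some (a 0) := by
      rw [← hlen]; exact getElem?_of_concat_prefix hpre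
    have hbound : sumLen η (k' + 1) m < (iterW η (k' + 1) [u 0]).length := by
      have := hpre.length_le
      simp only [List.length_append, List.length_singleton, hlen] at this
      omega
    have hiter := right_iter η p u hne hright t (sumLen η (k' + 1) m) (by rwa [← ht])
    rw [← ht] at hiter
    rw [hget] at hiter
    have ha0 : a 0 = u (sumLen η (k' + 1) m) := Option.some_inj.mp hiter
    have hun : u n = a 0 := by rw [ha0, ← hsum]
    simp [runSeed, hrun, hun]
  · obtain ⟨⟨t, ht⟩, hpk, hadm, -, hsum⟩ := hneg
    subst hw
    have hk1 : 1 ≤ k := le_trans hp hpk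
    obtain ⟨k', rfl⟩ : ∃ k', k = k' + 1 := ⟨k - 1, by omega⟩
    have hrun := run_adm η m a k' (u (-1)) hadm
    have hpre := concat_prefix η m a k' (u (-1)) hadm
    have hlen : (concatDT η (k' + 1) m).length = sumLen η (k' + 1) m :=
      concatDT_length η _ m
    have hget : (iterW η (k' + 1) [u (-1)])[sumLen η (k' + 1) m]? = some (a 0) := by
      rw [← hlen]; exact getElem?_of_concat_prefix hpre
    have hbound : sumLen η (k' + 1) m < (iterW η (k' + 1) [u (-1)]).length := by
      have := hpre.length_le
      simp only [List.length_append, List.length_singleton, hlen] at this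
      omega
    have hiter := left_iter η p u hne hleft t (sumLen η (k' + 1) m) (by rwa [← ht])
    rw [← ht] at hiter
    rw [hget] at hiter
    have ha0 : a 0 = u ((sumLen η (k' + 1) m : ℤ) - (iterW η (k' + 1) [u (-1)]).length) :=
      Option.some_inj.mp hiter
    have hun : u n = a 0 := by
      rw [ha0]
      congr 1
      omega
    simp [runSeed, hrun, hun]
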